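/- Let r₁, …, rₙ : [0,∞) → ℝ be continuous and strictly positive (the failure rates of n independent components), and let r = r₁ + ⋯ + rₙ (the failure rate of the series system). Then for every t > 0 the geometric aging intensity of the series system is bounded above by the largest component geometric aging intensity: r(t)/G(r)(t) ≤ max_{1 ≤ i ≤ n} rᵢ(t)/G(rᵢ)(t), where G(f)(t) = exp((1/t)∫₀ᵗ ln f(u) du). -/

import Mathlib

open MeasureTheory

lemma jensen_exp {t : ℝ} (ht : 0 < t) {h : ℝ → ℝ} (hc : ContinuousOn h (Set.Icc 0 t)) :
    Real.exp ((1/t) * ∫ u in (0:ℝ)..t, h u) ≤ (1/t) * ∫ u in (0:ℝ)..t, Real.exp (h u) := by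
  have hI : IntegrableOn h (Set.Ioc 0 t) :=
    (hc.integrableOn_Icc).mono_set Set.Ioc_subset_Icc_self
  have hIe : IntegrableOn (Real.exp ∘ h) (Set.Ioc 0 t) :=
    ((Real.continuous_exp.comp_continuousOn hc).integrableOn_Icc).mono_set Set.Ioc_subset_Icc_self
  have h0 : volume (Set.Ioc (0:ℝ) t) ≠ 0 := by
    simp [Real.volume_Ioc, ht.ne', ht]
  have hne : volume (Set.Ioc (0:ℝ) t) ≠ ⊤ := by
    simp [Real.volume_Ioc]
  have key := convexOn_exp.map_set_average_le Real.continuous_exp.continuousOn isClosed_univ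
    h0 hne (Filter.Eventually.of_forall fun _ => Set.mem_univ _) hI hIe
  rw [setAverage_eq, setAverage_eq] at key
  simp only [Real.volume_Ioc, Real.volume_real_Ioc_of_le ht.le, sub_zero, ENNReal.toReal_ofReal ht.le, smul_eq_mul] at key
  rw [intervalIntegral.integral_of_le ht.le, intervalIntegral.integral_of_le ht.le, one_div]
  exact key

theorem series_system_GAI_upper_bound
    (n : ℕ) (hn : 0 < n) (r : Fin n → ℝ → ℝ)
    (hc : ∀ i, ContinuousOn (r i) (Set.Ici 0))
    (hpos : ∀ i, ∀ u ∈ Set.Ici (0 : ℝ), 0 < r i u) :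
    ∀ t > (0:ℝ),
      (∑ i, r i t) /
          Real.exp ((1 / t) * ∫ u in (0:ℝ)..t, Real.log (∑ i, r i u)) ≤
        Finset.univ.sup' ⟨⟨0, hn⟩, Finset.mem_univ _⟩
          (fun i => r i t /
            Real.exp ((1 / t) * ∫ u in (0:ℝ)..t, Real.log (r i u))) := by
  intro t ht
  set S : ℝ → ℝ := fun u => ∑ i, r i u with hS
  have hScont : ContinuousOn S (Set.Ici 0) := continuousOn_finset_sum _ fun i _ => hc i
  haveI : Nonempty (Fin n) := ⟨⟨0, hn⟩⟩
  have hSpos : ∀ u ∈ Set.Ici (0:ℝ), 0 < S u := fun u hu =>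
    Finset.sum_pos (fun i _ => hpos i u hu) Finset.univ_nonempty
  have hIcc : Set.Icc (0:ℝ) t ⊆ Set.Ici 0 := Set.Icc_subset_Ici_self
  -- continuity of the logs on [0,t]
  have hlogS : ContinuousOn (fun u => Real.log (S u)) (Set.Icc 0 t) :=
    (hScont.mono hIcc).log fun u hu => (hSpos u (hIcc hu)).ne'
  have hlogr : ∀ i, ContinuousOn (fun u => Real.log (r i u)) (Set.Icc 0 t) := fun i =>
    ((hc i).mono hIcc).log fun u hu => (hpos i u (hIcc hu)).ne'
  set A : ℝ := (1 / t) * ∫ u in (0:ℝ)..t, Real.log (S u) with hA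
  set B : Fin n → ℝ := fun i => (1 / t) * ∫ u in (0:ℝ)..t, Real.log (r i u) with hB
  set M : ℝ := Finset.univ.sup' ⟨⟨0, hn⟩, Finset.mem_univ _⟩
      (fun i => r i t / Real.exp (B i)) with hM
  -- integrability
  have hintS : IntervalIntegrable (fun u => Real.log (S u)) volume 0 t :=
    (hlogS.mono (by rw [Set.uIcc_of_le ht.le])).intervalIntegrable
  have hintr : ∀ i, IntervalIntegrable (fun u => Real.log (r i u)) volume 0 t := fun i =>
    ((hlogr i).mono (by rw [Set.uIcc_of_le ht.le])).intervalIntegrable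
  -- key: ∑ exp (B i) ≤ exp A
  have key : ∑ i, Real.exp (B i) ≤ Real.exp A := by
    have h1 : ∀ i, Real.exp (B i - A) ≤
        (1 / t) * ∫ u in (0:ℝ)..t, Real.exp (Real.log (r i u) - Real.log (S u)) := by
      intro i
      have : B i - A = (1 / t) * ∫ u in (0:ℝ)..t,
          (Real.log (r i u) - Real.log (S u)) := by
        rw [intervalIntegral.integral_sub (hintr i) hintS, hA, hB, mul_sub]
      rw [this]
      exact jensen_exp ht ((hlogr i).sub hlogS)
    have h2 : ∀ i, (∫ u in (0:ℝ)..t, Real.exp (Real.log (r i u) - Real.log (S u))) =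
        ∫ u in (0:ℝ)..t, r i u / S u := by
      intro i
      apply intervalIntegral.integral_congr
      intro u hu
      rw [Set.uIcc_of_le ht.le] at hu
      show Real.exp (Real.log (r i u) - Real.log (S u)) = r i u / S u
      rw [Real.exp_sub, Real.exp_log (hpos i u (hIcc hu)), Real.exp_log (hSpos u (hIcc hu))]
    have hintq : ∀ i, IntervalIntegrable (fun u => r i u / S u) volume 0 t := fun i =>
      ((((hc i).mono hIcc).div (hScont.mono hIcc)
        fun u hu => (hSpos u (hIcc hu)).ne').mono
        (by rw [Set.uIcc_of_le ht.le])).intervalIntegrable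
    have h3 : ∑ i, Real.exp (B i - A) ≤ 1 := by
      calc ∑ i, Real.exp (B i - A)
          ≤ ∑ i, (1 / t) * ∫ u in (0:ℝ)..t, r i u / S u := by
            apply Finset.sum_le_sum
            intro i _
            rw [← h2 i]; exact h1 i
        _ = (1 / t) * ∫ u in (0:ℝ)..t, ∑ i, r i u / S u := by
            rw [← Finset.mul_sum, ← intervalIntegral.integral_finset_sum (fun i _ => hintq i)]
        _ = 1 := by
            have : (∫ u in (0:ℝ)..t, ∑ i, r i u / S u) = ∫ u in (0:ℝ)..t, (1:ℝ) := by
              apply intervalIntegral.integral_congr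
              intro u hu
              rw [Set.uIcc_of_le ht.le] at hu
              show (∑ i, r i u / S u) = 1
              rw [← Finset.sum_div, div_self (hSpos u (hIcc hu)).ne']
            rw [this]
            simp [one_div, inv_mul_cancel₀ ht.ne']
    calc ∑ i, Real.exp (B i) = (∑ i, Real.exp (B i - A)) * Real.exp A := by
          rw [Finset.sum_mul]
          congr 1; ext i; rw [← Real.exp_add]; ring_nf
      _ ≤ 1 * Real.exp A := by
          exact mul_le_mul_of_nonneg_right h3 (Real.exp_pos A).le
      _ = Real.exp A := one_mul _
  -- each r i t ≤ M * exp (B i)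
  have hMpos : 0 < M := by
    have := Finset.le_sup' (fun i => r i t / Real.exp (B i)) (Finset.mem_univ (⟨0, hn⟩ : Fin n))
    refine lt_of_lt_of_le ?_ this
    exact div_pos (hpos _ t ht.le) (Real.exp_pos _)
  have hle : ∀ i, r i t ≤ M * Real.exp (B i) := by
    intro i
    have h := Finset.le_sup' (fun i => r i t / Real.exp (B i)) (Finset.mem_univ i)
    rw [div_le_iff₀ (Real.exp_pos _)] at h
    exact h
  rw [div_le_iff₀ (Real.exp_pos _)]
  calc S t = ∑ i, r i t := rfl
    _ ≤ ∑ i, M * Real.exp (B i) := Finset.sum_le_sum fun i _ => hle i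
    _ = M * ∑ i, Real.exp (B i) := by rw [Finset.mul_sum]
    _ ≤ M * Real.exp A := mul_le_mul_of_nonneg_left key hMpos.le
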